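/- Let (𝒫,𝓛) be a horizontal shadow representation in general position and let (a,b,q,i,i′) be a BD-instance such that some BD(a,b,q,i,i′)-solution exists, the set {L_q,L_i,L_{i′}} does not dominate X(a,b), R(a,b) is not contained in S_{L_i}, and b ∉ S_{l_{L_i}}. Let c ∈ ℝ² satisfy: (1) c ∈ R(a,b); (2) c₁ ≥ (l_{L_i})₁ and c ∉ F_{l_{L_i}}; (3) no point of 𝒫 lying in R(a,b) belongs to F_c ∩ F_{L_i}. Then for every BD(a,c,q,i,i′)-solution Z₁ and every BD(c,b,q,i,i′)-solution Z₂, the set Z₁ ∪ Z₂ is a BD(a,b,q,i,i′)-solution. -/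

import Mathlib

open Set

abbrev Pt : Type := ℝ × ℝ

/-- The shadow of a point `t`. -/
def ptShadow (t : Pt) : Set Pt := {p : Pt | p.1 ≤ t.1 ∧ p.2 - p.1 ≤ t.2 - t.1}

/-- The shadow of a set of points. -/
def setShadow (L : Set Pt) : Set Pt := ⋃ t ∈ L, ptShadow t

/-- The reverse shadow of a point `t`. -/
def ptRevShadow (t : Pt) : Set Pt := {p : Pt | t.1 ≤ p.1 ∧ t.2 - t.1 ≤ p.2 - p.1}

/-- The reverse shadow of a set of points. -/
def setRevShadow (L : Set Pt) : Set Pt := ⋃ t ∈ L, ptRevShadow t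

/-- The region `A_t`. -/
def regionA (t : Pt) : Set Pt := {p : Pt | t.1 ≤ p.1 ∧ p.2 - p.1 ≤ t.2 - t.1}

/-- The region `B_t`. -/
def regionB (t : Pt) : Set Pt := {p : Pt | p.1 ≤ t.1 ∧ t.2 - t.1 ≤ p.2 - p.1}

/-- `s ∧ t := (s₁, s₁ + t₂ − t₁)`. -/
def diagMeet (s t : Pt) : Pt := (s.1, s.1 + t.2 - t.1)

/-- A closed horizontal line segment, given by its left and right endpoints. -/
structure HSeg where
  l : Pt
  r : Pt
  horiz : l.2 = r.2
  le : l.1 ≤ r.1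

/-- The set of points of a horizontal segment. -/
def HSeg.carrier (L : HSeg) : Set Pt := segment ℝ L.l L.r

/-- An element of a horizontal shadow representation: a point or a segment. -/
inductive Elem where
  | pt : Pt → Elem
  | seg : HSeg → Elem

/-- The set of points of the plane occupied by an element. -/
def Elem.carrier : Elem → Set Pt
  | .pt p => ({p} : Set Pt)
  | .seg L => L.carrier

/-- Adjacency between elements: two points are never adjacent; a point `p` and a
segment `L` are adjacent iff `p ∈ S_L`; two segments `L, L'` are adjacent iff
`L ∩ S_{L'} ≠ ∅` or `L' ∩ S_L ≠ ∅`. -/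
def ElemAdj : Elem → Elem → Prop
  | .pt _, .pt _ => False
  | .pt p, .seg L => p ∈ setShadow L.carrier
  | .seg L, .pt p => p ∈ setShadow L.carrier
  | .seg L, .seg L' =>
      (L.carrier ∩ setShadow L'.carrier).Nonempty ∨ (L'.carrier ∩ setShadow L.carrier).Nonempty

/-- `x` is dominated by the set `D`: it belongs to `D` or is adjacent to a member of `D`. -/
def DominatedBy (D : Set Elem) (x : Elem) : Prop := x ∈ D ∨ ∃ d ∈ D, ElemAdj x d

/-- `D` dominates `X`. -/
def Dominates (D X : Set Elem) : Prop := ∀ x ∈ X, DominatedBy D x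

/-- A horizontal shadow representation: a finite set of points and a finite set of
closed horizontal segments. -/
structure HSR where
  P : Set Pt
  Ls : Set HSeg
  finP : P.Finite
  finL : Ls.Finite

/-- The elements (points and segments) of a representation. -/
def HSR.elems (R : HSR) : Set Elem := (Elem.pt '' R.P) ∪ (Elem.seg '' R.Ls)

/-- All points of `𝒫` together with all endpoints of segments of `𝓛`. -/
def HSR.keyPts (R : HSR) : Set Pt := R.P ∪ ⋃ L ∈ R.Ls, ({L.l, L.r} : Set Pt)

/-- General position: all points of `𝒫` and all endpoints of segments of `𝓛` have
pairwise distinct first coordinates and pairwise distinct values of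
(second coordinate minus first coordinate). -/
def GenPos (R : HSR) : Prop :=
  ∀ s ∈ R.keyPts, ∀ t ∈ R.keyPts, s ≠ t → s.1 ≠ t.1 ∧ s.2 - s.1 ≠ t.2 - t.1

/-- `(L_j, L_{j'})` is a left-crossing pair. -/
def LeftCrossing (Lj Lj' : HSeg) : Prop := Lj.l ∈ ptShadow Lj'.l

/-- `(L_i, L_{i'})` is a right-crossing pair. -/
def RightCrossing (Li Li' : HSeg) : Prop := Li'.r ∈ ptShadow Li.r

/-- `𝓛^right_{j,j′}`. -/
def LRightPair (R : HSR) (Lj Lj' : HSeg) : Set Elem :=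
  {x | x ∈ R.elems ∧ Elem.carrier x ⊆ regionA (diagMeet Lj.l Lj'.l)}

/-- `𝓛^left_{i,i′}`. -/
def LLeftPair (R : HSR) (Li Li' : HSeg) : Set Elem :=
  {x | x ∈ R.elems ∧ Elem.carrier x ⊆ regionB (diagMeet Li.r Li'.r)}

/-- `𝓛^right_q`. -/
def LRightQ (R : HSR) (Lq : HSeg) : Set Elem :=
  {x | x ∈ R.elems ∧ ∀ p ∈ Elem.carrier x, p.2 - p.1 ≤ Lq.l.2 - Lq.l.1}

/-- The set of elements corresponding to a set of segments. -/
def segSet (Z : Set HSeg) : Set Elem := Elem.seg '' Z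

/-- `(L_i, L_{i'})` is an end-pair of `S`. -/
def IsEndPair (R : HSR) (S : Set Elem) (Li Li' : HSeg) : Prop :=
  RightCrossing Li Li' ∧ Elem.seg Li ∈ S ∧ Elem.seg Li' ∈ S ∧ S ⊆ LLeftPair R Li Li'

/-- `(L_j, L_{j'})` is a start-pair of `S`. -/
def IsStartPair (R : HSR) (S : Set Elem) (Lj Lj' : HSeg) : Prop :=
  LeftCrossing Lj Lj' ∧ Elem.seg Lj ∈ S ∧ Elem.seg Lj' ∈ S ∧ S ⊆ LRightPair R Lj Lj'

/-- `L_q` is a diagonally leftmost segment of `S`. -/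
def IsDiagLeftmost (R : HSR) (S : Set Elem) (Lq : HSeg) : Prop :=
  ∃ Lj, Elem.seg Lj ∈ S ∧ IsStartPair R S Lj Lq

/-- The region `R(a,b)`. -/
def regionR (a b : Pt) : Set Pt :=
  {p : Pt | p.1 < b.1 ∧ b.2 - b.1 ≤ p.2 - p.1 ∧ p.2 - p.1 ≤ a.2 - a.1}

/-- The set `X(a,b)` of elements entirely contained in `R(a,b)`. -/
def Xab (R : HSR) (a b : Pt) : Set Elem :=
  {x | x ∈ R.elems ∧ Elem.carrier x ⊆ regionR a b}

/-- A `BD(a,b,q,i,i′)`-instance. -/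
def BDInstance (R : HSR) (a b : Pt) (Lq Li Li' : HSeg) : Prop :=
  Lq ∈ R.Ls ∧ Li ∈ R.Ls ∧ Li' ∈ R.Ls ∧ RightCrossing Li Li' ∧
    Elem.seg Lq ∈ LLeftPair R Li Li' ∧ Elem.seg Li ∈ LRightQ R Lq ∧
    Elem.seg Li' ∈ LRightQ R Lq ∧ b.1 ≤ Li.r.1

/-- A `BD(a,b,q,i,i′)`-solution: a set `Z ⊆ 𝓛` dominating `X(a,b)`, with `(L_i,L_{i'})`
as an end-pair and `L_q` as a diagonally leftmost segment. -/
def BDSolution (R : HSR) (a b : Pt) (Lq Li Li' : HSeg) (Z : Set HSeg) : Prop :=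
  Z ⊆ R.Ls ∧ Dominates (segSet Z) (Xab R a b) ∧
    IsEndPair R (segSet Z) Li Li' ∧ IsDiagLeftmost R (segSet Z) Lq

/-- A minimum-cardinality `BD(a,b,q,i,i′)`-solution. -/
def IsMinBDSolution (R : HSR) (a b : Pt) (Lq Li Li' : HSeg) (Z : Set HSeg) : Prop :=
  BDSolution R a b Lq Li Li' Z ∧
    ∀ Z' : Set HSeg, BDSolution R a b Lq Li Li' Z' → Z.ncard ≤ Z'.ncard

lemma mem_carrier_iff (L : HSeg) (p : Pt) :
    p ∈ L.carrier ↔ p.2 = L.l.2 ∧ L.l.1 ≤ p.1 ∧ p.1 ≤ L.r.1 := by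
  constructor
  · rintro ⟨u, v, hu, hv, huv, rfl⟩
    have h2 := L.horiz
    have h1 := L.le
    constructor
    · show u * L.l.2 + v * L.r.2 = L.l.2
      rw [← h2]
      calc u * L.l.2 + v * L.l.2 = (u + v) * L.l.2 := by ring
        _ = L.l.2 := by rw [huv, one_mul]
    have hueq : u = 1 - v := by linarith
    subst hueq
    constructor
    · show L.l.1 ≤ (1 - v) * L.l.1 + v * L.r.1
      nlinarith [mul_nonneg hv (sub_nonneg.mpr h1)]
    · show (1 - v) * L.l.1 + v * L.r.1 ≤ L.r.1
      nlinarith [mul_nonneg hu (sub_nonneg.mpr h1)]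
  · rintro ⟨h2, h1, h1'⟩
    rcases eq_or_lt_of_le L.le with heq | hlt
    · have hp : p = L.l := by
        have : p.1 = L.l.1 := le_antisymm (heq ▸ h1') h1
        exact Prod.ext this h2
      rw [hp]; exact left_mem_segment ℝ L.l L.r
    · refine ⟨(L.r.1 - p.1) / (L.r.1 - L.l.1), (p.1 - L.l.1) / (L.r.1 - L.l.1),
        ?_, ?_, ?_, ?_⟩
      · apply div_nonneg <;> linarith
      · apply div_nonneg <;> linarith
      · have hne : L.r.1 - L.l.1 ≠ 0 := by linarith
        rw [← add_div,
          show L.r.1 - p.1 + (p.1 - L.l.1) = L.r.1 - L.l.1 by ring, div_self hne]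
      · have hne : L.r.1 - L.l.1 ≠ 0 := by linarith
        have h2' := L.horiz
        apply Prod.ext
        · show (L.r.1 - p.1) / (L.r.1 - L.l.1) * L.l.1 +
            (p.1 - L.l.1) / (L.r.1 - L.l.1) * L.r.1 = p.1
          field_simp
          ring
        · show (L.r.1 - p.1) / (L.r.1 - L.l.1) * L.l.2 +
            (p.1 - L.l.1) / (L.r.1 - L.l.1) * L.r.2 = p.2
          rw [← h2', h2]
          field_simp
          ring

lemma dominatedBy_mono {D D' : Set Elem} (h : D ⊆ D') {x : Elem}
    (hx : DominatedBy D x) : DominatedBy D' x := by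
  rcases hx with hx | ⟨d, hd, hadj⟩
  · exact Or.inl (h hx)
  · exact Or.inr ⟨d, h hd, hadj⟩

/-- Splitting step of the first kind: for a suitable splitting point `c`,
the union of a `BD(a,c,q,i,i′)`-solution and a `BD(c,b,q,i,i′)`-solution is a
`BD(a,b,q,i,i′)`-solution. -/
theorem stmt8 (R : HSR) (hgp : GenPos R) (a b : Pt) (Lq Li Li' : HSeg)
    (hinst : BDInstance R a b Lq Li Li')
    (hex : ∃ Z : Set HSeg, BDSolution R a b Lq Li Li' Z)
    (hndom : ¬ Dominates (segSet {Lq, Li, Li'}) (Xab R a b))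
    (hRab : ¬ regionR a b ⊆ setShadow Li.carrier)
    (hb : b ∉ ptShadow Li.l)
    (c : Pt)
    (hc1 : c ∈ regionR a b)
    (hc2 : Li.l.1 ≤ c.1 ∧ c ∉ ptRevShadow Li.l)
    (hc3 : ∀ p ∈ R.P, p ∈ regionR a b →
      ¬ (p ∈ ptRevShadow c ∧ p ∈ setRevShadow Li.carrier)) :
    ∀ Z₁ Z₂ : Set HSeg, BDSolution R a c Lq Li Li' Z₁ → BDSolution R c b Lq Li Li' Z₂ →
      BDSolution R a b Lq Li Li' (Z₁ ∪ Z₂) := by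
  intro Z₁ Z₂ hZ₁ hZ₂
  obtain ⟨hZ₁L, hZ₁dom, hZ₁end, hZ₁diag⟩ := hZ₁
  obtain ⟨hZ₂L, hZ₂dom, hZ₂end, hZ₂diag⟩ := hZ₂
  have hseg : segSet (Z₁ ∪ Z₂) = segSet Z₁ ∪ segSet Z₂ := Set.image_union _ _ _
  have hsub1 : segSet Z₁ ⊆ segSet (Z₁ ∪ Z₂) := Set.image_mono Set.subset_union_left
  have hsub2 : segSet Z₂ ⊆ segSet (Z₁ ∪ Z₂) := Set.image_mono Set.subset_union_right
  obtain ⟨hcb, hbc, hca⟩ := hc1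
  have hbr : b.1 ≤ Li.r.1 := hinst.2.2.2.2.2.2.2
  have hlic : Li.l.1 ≤ c.1 := hc2.1
  have hdiagLil : c.2 - c.1 < Li.l.2 - Li.l.1 := by
    by_contra h
    exact hc2.2 ⟨hlic, not_lt.mp h⟩
  have hLiZ1 : Elem.seg Li ∈ segSet Z₁ := hZ₁end.2.1
  refine ⟨Set.union_subset hZ₁L hZ₂L, ?_, ?_, ?_⟩
  · -- Domination
    intro x hx
    obtain ⟨hxe, hxc⟩ := hx
    cases x with
    | pt p =>
      have hp : p ∈ regionR a b := hxc rfl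
      obtain ⟨hpb, hpbd, hpad⟩ := hp
      by_cases hd : p.2 - p.1 ≤ c.2 - c.1
      · refine dominatedBy_mono hsub2 (hZ₂dom _ ⟨hxe, ?_⟩)
        intro q hq
        simp only [Elem.carrier, Set.mem_singleton_iff] at hq
        subst hq
        exact ⟨hpb, hpbd, hd⟩
      · push_neg at hd
        by_cases hx1 : p.1 < c.1
        · refine dominatedBy_mono hsub1 (hZ₁dom _ ⟨hxe, ?_⟩)
          intro q hq
          simp only [Elem.carrier, Set.mem_singleton_iff] at hq
          subst hq
          exact ⟨hx1, hd.le, hpad⟩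
        · push_neg at hx1
          have hsmem : ((p.1, Li.l.2) : Pt) ∈ Li.carrier :=
            (mem_carrier_iff Li _).mpr ⟨rfl, le_trans hlic hx1, le_trans hpb.le hbr⟩
          by_cases hsd : p.2 - p.1 ≤ Li.l.2 - p.1
          · refine Or.inr ⟨Elem.seg Li, hsub1 hLiZ1, ?_⟩
            show p ∈ setShadow Li.carrier
            exact Set.mem_biUnion hsmem ⟨le_refl p.1, hsd⟩
          · push_neg at hsd
            exfalso
            have hpP : p ∈ R.P := by
              rcases hxe with h | h
              · obtain ⟨q, hq, hqe⟩ := h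
                injection hqe with h'
                subst h'; exact hq
              · obtain ⟨q, hq, hqe⟩ := h
                exact absurd hqe (by simp)
            exact hc3 p hpP ⟨hpb, hpbd, hpad⟩
              ⟨⟨hx1, hd.le⟩, Set.mem_biUnion hsmem ⟨le_refl p.1, hsd.le⟩⟩
    | seg L =>
      have hcar : ∀ q ∈ L.carrier, q ∈ regionR a b := fun q hq => hxc hq
      have hLr := hcar L.r (right_mem_segment ℝ L.l L.r)
      have hhor := L.horiz
      by_cases hd1 : L.l.2 - L.l.1 ≤ c.2 - c.1
      · refine dominatedBy_mono hsub2 (hZ₂dom _ ⟨hxe, ?_⟩)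
        intro q hq
        obtain ⟨hq2, hq1, hq1'⟩ := (mem_carrier_iff L q).mp hq
        exact ⟨(hcar q hq).1, (hcar q hq).2.1, by linarith⟩
      · push_neg at hd1
        by_cases hcase : L.r.1 < c.1 ∧ c.2 - c.1 ≤ L.r.2 - L.r.1
        · refine dominatedBy_mono hsub1 (hZ₁dom _ ⟨hxe, ?_⟩)
          intro q hq
          obtain ⟨hq2, hq1, hq1'⟩ := (mem_carrier_iff L q).mp hq
          refine ⟨lt_of_le_of_lt hq1' hcase.1, ?_, (hcar q hq).2.2⟩
          have := hcase.2
          linarith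
        · refine Or.inr ⟨Elem.seg Li, hsub1 hLiZ1, ?_⟩
          show (L.carrier ∩ setShadow Li.carrier).Nonempty ∨
            (Li.carrier ∩ setShadow L.carrier).Nonempty
          by_cases hA : Li.l.1 ≤ L.r.1
          · have hsmem : ((L.r.1, Li.l.2) : Pt) ∈ Li.carrier :=
              (mem_carrier_iff Li _).mpr ⟨rfl, hA, le_trans hLr.1.le hbr⟩
            by_cases hsd : L.r.2 - L.r.1 ≤ Li.l.2 - L.r.1
            · exact Or.inl ⟨L.r, right_mem_segment ℝ L.l L.r,
                Set.mem_biUnion hsmem ⟨le_refl _, hsd⟩⟩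
            · push_neg at hsd
              exact Or.inr ⟨_, hsmem,
                Set.mem_biUnion (right_mem_segment ℝ L.l L.r) ⟨le_refl _, hsd.le⟩⟩
          · push_neg at hA
            have hdr : L.r.2 - L.r.1 < c.2 - c.1 := by
              by_contra h
              push_neg at h
              exact hcase ⟨lt_of_lt_of_le hA hlic, h⟩
            exact Or.inl ⟨L.r, right_mem_segment ℝ L.l L.r,
              Set.mem_biUnion (left_mem_segment ℝ Li.l Li.r) ⟨hA.le, by linarith⟩⟩
  · -- End pair
    refine ⟨hZ₁end.1, hsub1 hZ₁end.2.1, hsub1 hZ₁end.2.2.1, ?_⟩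
    rw [hseg]
    exact Set.union_subset hZ₁end.2.2.2 hZ₂end.2.2.2
  · -- Diagonally leftmost
    obtain ⟨Lj₁, hLj₁m, hcr₁, hj₁m, hq₁m, hsp₁⟩ := hZ₁diag
    obtain ⟨Lj₂, hLj₂m, hcr₂, hj₂m, hq₂m, hsp₂⟩ := hZ₂diag
    by_cases hjj : Lj₁.l.1 ≤ Lj₂.l.1
    · refine ⟨Lj₁, hsub1 hLj₁m, hcr₁, hsub1 hLj₁m, hsub1 hq₁m, ?_⟩
      rw [hseg]
      rintro x (hx | hx)
      · exact hsp₁ hx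
      · obtain ⟨hxe, hxA⟩ := hsp₂ hx
        refine ⟨hxe, fun q hq => ?_⟩
        obtain ⟨h1, h2⟩ := hxA hq
        simp only [regionA, diagMeet, Set.mem_setOf_eq] at h1 h2 ⊢
        exact ⟨le_trans hjj h1, by linarith⟩
    · push_neg at hjj
      refine ⟨Lj₂, hsub2 hLj₂m, hcr₂, hsub2 hLj₂m, hsub2 hq₂m, ?_⟩
      rw [hseg]
      rintro x (hx | hx)
      · obtain ⟨hxe, hxA⟩ := hsp₁ hx
        refine ⟨hxe, fun q hq => ?_⟩
        obtain ⟨h1, h2⟩ := hxA hq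
        simp only [regionA, diagMeet, Set.mem_setOf_eq] at h1 h2 ⊢
        exact ⟨le_trans hjj.le h1, by linarith⟩
      · exact hsp₂ hx
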